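/- arXiv:2011.00330 — 2 statements merged into one kernel-verified Lean document; each statement's English description precedes it below -/
import Mathlib

section
/- Fix integers n ≥ 2, k ≥ 1 with 2^k ≤ n, and a real T > 0, and let λ : ℝ≥0 → ℝ≥0 be an increasing bijection. Define x(k) = ⌊ λ⁻¹(T/⌈log_{2^k}(n)⌉) / (2^{k·⌈log_{2^k}(n)⌉}·(2^k − 1)) ⌋ and, for stage r with surviving set S_{r+1}, t_r = ⌊ λ⁻¹(T/⌈log_{2^k}(n)⌉) / |S_{r+1}| ⌋ where |S_{r+1}| = ⌈n/2^{(r+1)k}⌉. Then for all stages r ≥ 0, t_r ≥ 2^{rk}·(2^k − 1)·x(k). -/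
/-- Pull-count lower bound for Staged Sequential Halving: with `L = ⌈log_{2^k} n⌉`
stages each of duration `T/L`, scaling function `f` (an increasing bijection of
`[0,∞)` with inverse `g`), per-stage pulls per arm
`t_r = ⌊g(T/L) / |S_{r+1}|⌋` with `|S_{r+1}| = ⌈n/2^{(r+1)k}⌉`, and
`x(k) = ⌊g(T/L) / (2^{kL}(2^k − 1))⌋`, we have `t_r ≥ 2^{rk}(2^k − 1)·x(k)`
for every stage `r`. -/
theorem ssh_pull_bound
    (f g : ℝ → ℝ) (n k : ℕ) (T : ℝ)
    (hn : 2 ≤ n) (hk : 1 ≤ k) (hkn : 2 ^ k ≤ n) (hT : 0 < T)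
    (hmono : StrictMonoOn f (Set.Ici (0:ℝ)))
    (hf0 : f 0 = 0)
    (hfnonneg : ∀ x : ℝ, 0 ≤ x → 0 ≤ f x)
    (hg : ∀ t : ℝ, 0 ≤ t → 0 ≤ g t ∧ f (g t) = t)
    (hgf : ∀ x : ℝ, 0 ≤ x → g (f x) = x) :
    ∀ r : ℕ, r < ⌈Real.logb (2 ^ k) n⌉₊ →
      2 ^ (r * k) * (2 ^ k - 1) *
          ⌊g (T / ⌈Real.logb (2 ^ k) n⌉₊) /
            ((2 : ℝ) ^ (k * ⌈Real.logb (2 ^ k) n⌉₊) * ((2 : ℝ) ^ k - 1))⌋₊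
        ≤ ⌊g (T / ⌈Real.logb (2 ^ k) n⌉₊) /
            ((⌈(n : ℝ) / 2 ^ ((r + 1) * k)⌉₊ : ℕ) : ℝ)⌋₊ := by
  intro r hr
  set L : ℕ := ⌈Real.logb (2 ^ k) n⌉₊ with hLdef
  have hL1 : 1 ≤ L := by omega
  -- A := g (T / L)
  have hLpos : (0:ℝ) < (L:ℝ) := by exact_mod_cast Nat.pos_of_ne_zero (by omega)
  have hAnn : 0 ≤ g (T / (L:ℝ)) := (hg _ (le_of_lt (div_pos hT hLpos))).1
  set A : ℝ := g (T / (L:ℝ))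
  -- n ≤ 2^(k*L)
  have hb1 : (1:ℝ) < (2:ℝ) ^ k := one_lt_pow₀ (by norm_num) (by omega)
  have hnpos : (0:ℝ) < (n:ℝ) := by exact_mod_cast (by omega : 0 < n)
  have hlogb : Real.logb ((2:ℝ)^k) (n:ℝ) ≤ (L:ℝ) := Nat.le_ceil _
  have hnL : (n:ℝ) ≤ (2:ℝ) ^ (k * L) := by
    have h1 : (n:ℝ) = ((2:ℝ)^k) ^ (Real.logb ((2:ℝ)^k) (n:ℝ)) := by
      rw [Real.rpow_logb (by positivity) (ne_of_gt hb1) hnpos]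
    have h2 : ((2:ℝ)^k) ^ (Real.logb ((2:ℝ)^k) (n:ℝ)) ≤ ((2:ℝ)^k) ^ ((L:ℝ)) :=
      Real.rpow_le_rpow_left_iff hb1 |>.mpr hlogb
    calc (n:ℝ) = ((2:ℝ)^k) ^ (Real.logb ((2:ℝ)^k) (n:ℝ)) := h1
      _ ≤ ((2:ℝ)^k) ^ ((L:ℝ)) := h2
      _ = ((2:ℝ)^k) ^ (L:ℕ) := by rw [Real.rpow_natCast]
      _ = (2:ℝ) ^ (k * L) := by rw [← pow_mul]
  have hrk : (r + 1) * k ≤ k * L := by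
    have : r + 1 ≤ L := hr
    calc (r+1) * k ≤ L * k := Nat.mul_le_mul_right k this
      _ = k * L := Nat.mul_comm _ _
  set d : ℕ := ⌈(n : ℝ) / 2 ^ ((r + 1) * k)⌉₊ with hddef
  have hd1 : 1 ≤ d := Nat.one_le_ceil_iff.mpr (by positivity)
  have hdle : d ≤ 2 ^ (k * L - (r + 1) * k) := by
    apply Nat.ceil_le.mpr
    rw [div_le_iff₀ (by positivity)]
    push_cast
    rw [← pow_add]
    have : k * L - (r + 1) * k + (r + 1) * k = k * L := Nat.sub_add_cancel hrk
    rw [this]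
    exact hnL
  -- key: 2^(r*k) * d ≤ 2^(k*L)
  have hkey : 2 ^ (r * k) * d ≤ 2 ^ (k * L) := by
    calc 2 ^ (r * k) * d ≤ 2 ^ (r * k) * 2 ^ (k * L - (r + 1) * k) :=
          Nat.mul_le_mul_left _ hdle
      _ = 2 ^ (r * k + (k * L - (r + 1) * k)) := (pow_add 2 _ _).symm
      _ ≤ 2 ^ (k * L) := Nat.pow_le_pow_right (by norm_num) (by
          have h1 : (r + 1) * k = r * k + k := by ring
          omega)
  have hdpos : (0:ℝ) < (d:ℝ) := by exact_mod_cast hd1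
  have h2k1 : (1:ℝ) ≤ (2:ℝ)^k - 1 := by
    have h2 : (2:ℝ) = 2^1 := (pow_one 2).symm
    have : (2:ℝ)^1 ≤ (2:ℝ)^k := pow_le_pow_right₀ (by norm_num) hk
    linarith
  have hDpos : (0:ℝ) < (2:ℝ) ^ (k * L) * ((2:ℝ)^k - 1) := by positivity
  -- cast of Nat subtraction
  have hcast : ((2 ^ k - 1 : ℕ) : ℝ) = (2:ℝ)^k - 1 := by
    have : 1 ≤ 2 ^ k := Nat.one_le_two_pow
    push_cast [Nat.cast_sub this]
    ring
  apply Nat.le_floor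
  rw [le_div_iff₀ hdpos]
  push_cast [hcast]
  have hfloor : (⌊A / ((2:ℝ) ^ (k * L) * ((2:ℝ)^k - 1))⌋₊ : ℝ)
      ≤ A / ((2:ℝ) ^ (k * L) * ((2:ℝ)^k - 1)) :=
    Nat.floor_le (by positivity)
  have hMd : (2:ℝ) ^ (r * k) * ((2:ℝ)^k - 1) * (d:ℝ) ≤ (2:ℝ) ^ (k * L) * ((2:ℝ)^k - 1) := by
    have : ((2 ^ (r * k) * d : ℕ) : ℝ) ≤ ((2 ^ (k * L) : ℕ) : ℝ) := by exact_mod_cast hkey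
    push_cast at this
    nlinarith [this, h2k1]
  calc (2:ℝ) ^ (r * k) * ((2:ℝ)^k - 1) * (⌊A / ((2:ℝ) ^ (k * L) * ((2:ℝ)^k - 1))⌋₊ : ℝ) * (d:ℝ)
      ≤ (2:ℝ) ^ (r * k) * ((2:ℝ)^k - 1) * (A / ((2:ℝ) ^ (k * L) * ((2:ℝ)^k - 1))) * (d:ℝ) := by
        apply mul_le_mul_of_nonneg_right _ hdpos.le
        apply mul_le_mul_of_nonneg_left hfloor (by positivity)
    _ = ((2:ℝ) ^ (r * k) * ((2:ℝ)^k - 1) * (d:ℝ)) * (A / ((2:ℝ) ^ (k * L) * ((2:ℝ)^k - 1))) := by ring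
    _ ≤ ((2:ℝ) ^ (k * L) * ((2:ℝ)^k - 1)) * (A / ((2:ℝ) ^ (k * L) * ((2:ℝ)^k - 1))) := by
        apply mul_le_mul_of_nonneg_right hMd (by positivity)
    _ = A := by field_simp
end

section
/- Let δ ∈ (0, 1/2). Then d(δ, 1−δ) ≥ log(1/(2.4δ)), where d(x,y) = x·log(x/y) + (1−x)·log((1−x)/(1−y)) is the binary KL divergence. -/
open Real Finset

lemma log65 : (9:ℝ)/50 ≤ Real.log (6/5) := by
  rw [Real.le_log_iff_exp_le (by norm_num)]
  have h := Real.exp_bound' (x := 9/50) (by norm_num) (by norm_num) (n := 4) (by norm_num)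
  simp [Finset.sum_range_succ, Nat.factorial] at h
  norm_num at h ⊢
  linarith

lemma poly_nonneg (u : ℝ) (hu0 : (0:ℝ) ≤ u) (hu7 : u ≤ 7/10) :
    (0:ℝ) ≤ 9/50 - u + 3/2*u^2 - 1/3*u^3 + 5/12*u^4 - 1/5*u^5 + 7/30*u^6
      - 1/7*u^7 - 64/21*u^8 := by
  rcases le_or_gt u (9/20) with hc | hc
  · have hv : (0:ℝ) ≤ 9/20 - u := by linarith
    linarith [mul_nonneg (pow_nonneg hu0 0) (pow_nonneg hv 12),
        mul_nonneg (pow_nonneg hu0 1) (pow_nonneg hv 11),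
        mul_nonneg (pow_nonneg hu0 2) (pow_nonneg hv 10),
        mul_nonneg (pow_nonneg hu0 3) (pow_nonneg hv 9),
        mul_nonneg (pow_nonneg hu0 4) (pow_nonneg hv 8),
        mul_nonneg (pow_nonneg hu0 5) (pow_nonneg hv 7),
        mul_nonneg (pow_nonneg hu0 6) (pow_nonneg hv 6),
        mul_nonneg (pow_nonneg hu0 7) (pow_nonneg hv 5),
        mul_nonneg (pow_nonneg hu0 8) (pow_nonneg hv 4),
        mul_nonneg (pow_nonneg hu0 9) (pow_nonneg hv 3),
        mul_nonneg (pow_nonneg hu0 10) (pow_nonneg hv 2),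
        mul_nonneg (pow_nonneg hu0 11) (pow_nonneg hv 1),
        mul_nonneg (pow_nonneg hu0 12) (pow_nonneg hv 0)]
  · have hw : (0:ℝ) ≤ u - 9/20 := by linarith
    have hv : (0:ℝ) ≤ 7/10 - u := by linarith
    linarith [mul_nonneg (pow_nonneg hw 0) (pow_nonneg hv 8),
        mul_nonneg (pow_nonneg hw 1) (pow_nonneg hv 7),
        mul_nonneg (pow_nonneg hw 2) (pow_nonneg hv 6),
        mul_nonneg (pow_nonneg hw 3) (pow_nonneg hv 5),
        mul_nonneg (pow_nonneg hw 4) (pow_nonneg hv 4),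
        mul_nonneg (pow_nonneg hw 5) (pow_nonneg hv 3),
        mul_nonneg (pow_nonneg hw 6) (pow_nonneg hv 2),
        mul_nonneg (pow_nonneg hw 7) (pow_nonneg hv 1),
        mul_nonneg (pow_nonneg hw 8) (pow_nonneg hv 0)]

lemma gbound (u : ℝ) (hu0 : 0 < u) (hu1 : u < 1) :
    -Real.log (6/5) ≤ u * Real.log (1+u) + (1-u) * Real.log (1-u) := by
  have habs : |u| < 1 := by rw [abs_of_pos hu0]; exact hu1
  rcases le_or_gt u 0.7 with hc | hc
  · -- series region
    have hA := Real.abs_log_sub_add_sum_range_le habs 7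
    have habs' : |(-u)| < 1 := by rwa [abs_neg]
    have hB := Real.abs_log_sub_add_sum_range_le habs' 7
    rw [abs_neg] at hB
    rw [abs_of_pos hu0] at hA hB
    simp only [Finset.sum_range_succ, Finset.sum_range_zero] at hA hB
    norm_num at hA hB
    rw [abs_le] at hA hB
    have htail : u^8 / (1-u) ≤ (10/3) * u^8 := by
      rw [div_le_iff₀ (by linarith)]
      nlinarith [pow_nonneg hu0.le 8]
    -- lower bounds on logs
    have hA' : -(u + u^2/2 + u^3/3 + u^4/4 + u^5/5 + u^6/6 + u^7/7) - (10/3)*u^8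
        ≤ Real.log (1-u) := by
      have h := hA.1
      linarith [htail]
    have hB' : (u - u^2/2 + u^3/3 - u^4/4 + u^5/5 - u^6/6 + u^7/7) - (10/3)*u^8
        ≤ Real.log (1+u) := by
      have h := hB.1
      ring_nf at h ⊢
      linarith [htail]
    have h1 : u * ((u - u^2/2 + u^3/3 - u^4/4 + u^5/5 - u^6/6 + u^7/7) - (10/3)*u^8)
        ≤ u * Real.log (1+u) := by
      exact mul_le_mul_of_nonneg_left hB' hu0.le
    have h2 : (1-u) * (-(u + u^2/2 + u^3/3 + u^4/4 + u^5/5 + u^6/6 + u^7/7) - (10/3)*u^8)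
        ≤ (1-u) * Real.log (1-u) := by
      exact mul_le_mul_of_nonneg_left hA' (by linarith)
    linarith [log65, h1, h2, poly_nonneg u hu0.le (by linarith)]
  · -- u ≥ 0.7
    have hl1 : 1 - (1+u)⁻¹ ≤ Real.log (1+u) :=
      Real.one_sub_inv_le_log_of_pos (by linarith)
    have h1 : (49:ℝ)/170 ≤ u * Real.log (1+u) := by
      have h1u : (0:ℝ) < 1 + u := by linarith
      have key : (49:ℝ)/170 ≤ u * (1 - (1+u)⁻¹) := by
        rw [inv_eq_one_div, show (1:ℝ) - 1/(1+u) = u/(1+u) by field_simp; ring, ← sub_nonneg]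
        rw [show u * (u/(1+u)) - 49/170 = (170*u^2 - 49*(1+u))/(170*(1+u)) by field_simp]
        apply div_nonneg _ (by linarith)
        nlinarith
      nlinarith [mul_le_mul_of_nonneg_left hl1 hu0.le]
    set t := 1 - u with ht
    have ht0 : 0 < t := by simp [ht]; linarith
    have h2 : -(Real.exp 1)⁻¹ ≤ t * Real.log t := by
      have h := Real.add_one_le_exp (-1 - Real.log t)
      rw [Real.exp_sub, Real.exp_log ht0] at h
      have h3 : -Real.log t ≤ Real.exp (-1) / t := by linarith
      have h4 := (le_div_iff₀ ht0).mp h3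
      rw [Real.exp_neg] at h4
      nlinarith
    have he : (2.5:ℝ) < Real.exp 1 := by
      have := Real.exp_one_gt_d9; linarith
    have h3 : (Real.exp 1)⁻¹ < 0.4 := by
      rw [inv_lt_comm₀ (Real.exp_pos 1) (by norm_num)]
      linarith
    have h4 : (9:ℝ)/50 ≤ Real.log (6/5) := log65
    linarith

/-- Binary KL divergence bound: for `δ ∈ (0, 1/2)`,
`d(δ, 1−δ) ≥ log(1/(2.4 δ))` where `d` is the Bernoulli KL divergence. -/
theorem binary_kl_lower_bound (δ : ℝ) (h0 : 0 < δ) (h1 : δ < 1 / 2) :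
    Real.log (1 / (2.4 * δ)) ≤
      δ * Real.log (δ / (1 - δ)) + (1 - δ) * Real.log ((1 - δ) / δ) := by
  have hd1 : 0 < 1 - δ := by linarith
  have key := gbound (1 - 2*δ) (by linarith) (by linarith)
  have e1 : Real.log (1 + (1 - 2*δ)) = Real.log (1-δ) + Real.log 2 := by
    have : (1:ℝ) + (1 - 2*δ) = (1-δ) * 2 := by ring
    rw [this, Real.log_mul (by linarith) (by norm_num)]
  have e2 : Real.log (1 - (1 - 2*δ)) = Real.log δ + Real.log 2 := by
    have : (1:ℝ) - (1 - 2*δ) = δ * 2 := by ring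
    rw [this, Real.log_mul (by linarith) (by norm_num)]
  rw [e1, e2] at key
  have e3 : Real.log (1 / (2.4 * δ)) = -(Real.log (6/5) + Real.log 2) - Real.log δ := by
    have h24 : (2.4:ℝ) * δ = (6/5) * 2 * δ := by norm_num
    rw [h24, one_div, Real.log_inv, Real.log_mul (by norm_num) (by linarith),
      Real.log_mul (by norm_num) (by norm_num)]
    ring
  have e4 : Real.log (δ / (1-δ)) = Real.log δ - Real.log (1-δ) :=
    Real.log_div (by linarith) (by linarith)
  have e5 : Real.log ((1-δ) / δ) = Real.log (1-δ) - Real.log δ :=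
    Real.log_div (by linarith) (by linarith)
  rw [e3, e4, e5]
  nlinarith [key]
end
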